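/- Let p be a special d-dimensional ICS with scale factor r. Then p_{i+d+2} - p_{i+d+3} = -r(p_i - p_{i+1}) for all i ≥ 1; consequently there exists v ∈ ℝ^d such that p_{i+d+2} = v - r·p_i for all i ≥ 1. In particular, p is periodic if and only if r = 1. -/

import Mathlib

/-- `GoodPosition p a n`: the points `p a, ..., p (a+n-1)` of `ℝ^d` are affinely
independent and each point is equidistant from all earlier ones. -/
def GoodPosition {d : ℕ} (p : ℕ → EuclideanSpace ℝ (Fin d)) (a n : ℕ) : Prop :=
  AffineIndependent ℝ (fun i : Fin n => p (a + i)) ∧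
  ∀ i j k : ℕ, i < n → j < i → k < i →
    dist (p (a + j)) (p (a + i)) = dist (p (a + k)) (p (a + i))

/-- `IsCircumcenter Q p a n`: `Q` lies in the affine span of `p a, ..., p (a+n-1)`
and is equidistant from these points. -/
def IsCircumcenter {d : ℕ} (Q : EuclideanSpace ℝ (Fin d))
    (p : ℕ → EuclideanSpace ℝ (Fin d)) (a n : ℕ) : Prop :=
  Q ∈ affineSpan ℝ (p '' Set.Ico a (a + n)) ∧ ∃ R : ℝ, ∀ i < n, dist Q (p (a + i)) = R

/-- A special `d`-dimensional iterated circumcenter sequence. -/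
def IsSpecialICS (d : ℕ) (p : ℕ → EuclideanSpace ℝ (Fin d)) : Prop :=
  GoodPosition p 1 (d + 1) ∧
  ∀ i, 1 ≤ i → AffineIndependent ℝ (fun k : Fin (d + 1) => p (i + k)) ∧
    IsCircumcenter (p (i + d + 1)) p i (d + 1)

open RealInnerProductSpace

namespace ICSAux

variable {d : ℕ}

/-- consecutive difference vectors -/
noncomputable def uvec (p : ℕ → EuclideanSpace ℝ (Fin d)) (j : ℕ) : EuclideanSpace ℝ (Fin d) :=
  p j - p (j + 1)

/-- consecutive distances -/
noncomputable def mdist (p : ℕ → EuclideanSpace ℝ (Fin d)) (j : ℕ) : ℝ :=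
  dist (p j) (p (j + 1))

lemma polar (x y z w : EuclideanSpace ℝ (Fin d)) :
    ⟪x - y, z - w⟫ = (dist x w ^ 2 + dist y z ^ 2 - dist x z ^ 2 - dist y w ^ 2) / 2 := by
  have h : ∀ a b : EuclideanSpace ℝ (Fin d), dist a b ^ 2 = ⟪a, a⟫ - 2 * ⟪a, b⟫ + ⟪b, b⟫ := by
    intro a b
    rw [dist_eq_norm, ← real_inner_self_eq_norm_sq]
    simp [inner_sub_left, inner_sub_right, real_inner_comm a b]
    rw [norm_sub_sq_real]
  rw [h, h, h, h, inner_sub_left, inner_sub_right, inner_sub_right]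
  ring

/-- Lemma A: backward distances to `p (j+k+1)` over gaps up to `d+1` coincide. -/
lemma lemA (p : ℕ → EuclideanSpace ℝ (Fin d)) (hics : IsSpecialICS d p)
    (j k : ℕ) (hj : 1 ≤ j) (hk : k ≤ d) :
    dist (p j) (p (j + k + 1)) = dist (p (j + k)) (p (j + k + 1)) := by
  rcases Nat.lt_or_ge (j + k) (d + 1) with hcase | hcase
  · -- good position case
    obtain ⟨j', rfl⟩ : ∃ j', j = j' + 1 := ⟨j - 1, by omega⟩
    have h := hics.1.2 (j' + k + 1) j' (j' + k) (by omega) (by omega) (by omega)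
    have e1 : 1 + j' = j' + 1 := by ring
    have e2 : 1 + (j' + k + 1) = j' + 1 + k + 1 := by ring
    have e3 : 1 + (j' + k) = j' + 1 + k := by ring
    rw [e1, e2, e3] at h
    exact h
  · -- circumcenter case
    obtain ⟨i0, hi0, hie⟩ : ∃ i0, 1 ≤ i0 ∧ i0 + d = j + k := ⟨j + k - d, by omega⟩
    obtain ⟨R, hR⟩ := (hics.2 i0 hi0).2.2
    have h1 := hR (d - k) (by omega)
    have h2 := hR d (by omega)
    have e1 : i0 + (d - k) = j := by omega
    have e3 : i0 + d + 1 = j + k + 1 := by omega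
    rw [e3, e1] at h1
    rw [e3, hie] at h2
    rw [dist_comm] at h1 h2
    rw [h1, h2]

lemma lemB0 (p : ℕ → EuclideanSpace ℝ (Fin d)) (j : ℕ) :
    ⟪uvec p j, uvec p j⟫ = mdist p j ^ 2 := by
  rw [uvec, real_inner_self_eq_norm_sq, mdist, dist_eq_norm]

lemma lemB1 (p : ℕ → EuclideanSpace ℝ (Fin d)) (hics : IsSpecialICS d p) (hd : 2 ≤ d)
    (j : ℕ) (hj : 1 ≤ j) :
    ⟪uvec p j, uvec p (j + 1)⟫ = -(mdist p j ^ 2) / 2 := by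
  rw [uvec, uvec, polar]
  have h := lemA p hics j 1 hj (by omega)
  rw [mdist, h, dist_self]
  ring

lemma lemB2 (p : ℕ → EuclideanSpace ℝ (Fin d)) (hics : IsSpecialICS d p)
    (j k : ℕ) (hj : 1 ≤ j) (hk2 : 2 ≤ k) (hkd : k ≤ d) :
    ⟪uvec p j, uvec p (j + k)⟫ = 0 := by
  obtain ⟨k', rfl⟩ : ∃ k', k = k' + 2 := ⟨k - 2, by omega⟩
  rw [uvec, uvec, polar]
  have h1 : dist (p j) (p (j + (k' + 2) + 1)) = dist (p (j + (k' + 2))) (p (j + (k' + 2) + 1)) :=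
    lemA p hics j (k' + 2) hj (by omega)
  have h2 : dist (p (j + 1)) (p (j + (k' + 2))) = dist (p (j + (k' + 2) - 1)) (p (j + (k' + 2))) := by
    have := lemA p hics (j + 1) k' (by omega) (by omega)
    rw [show j + 1 + k' + 1 = j + (k' + 2) by ring, show j + 1 + k' = j + (k' + 2) - 1 by omega] at this
    exact this
  have h3 : dist (p j) (p (j + (k' + 2))) = dist (p (j + (k' + 2) - 1)) (p (j + (k' + 2))) := by
    have := lemA p hics j (k' + 1) hj (by omega)
    rw [show j + (k' + 1) + 1 = j + (k' + 2) by ring, show j + (k' + 1) = j + (k' + 2) - 1 by omega] at this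
    exact this
  have h4 : dist (p (j + 1)) (p (j + (k' + 2) + 1)) = dist (p (j + (k' + 2))) (p (j + (k' + 2) + 1)) := by
    have := lemA p hics (j + 1) (k' + 1) (by omega) (by omega)
    rw [show j + 1 + (k' + 1) + 1 = j + (k' + 2) + 1 by ring, show j + 1 + (k' + 1) = j + (k' + 2) by ring] at this
    exact this
  rw [h1, h2, h3, h4]
  ring

end ICSAux

namespace ICSAux2
open ICSAux Matrix

variable {d : ℕ}

lemma lemC (p : ℕ → EuclideanSpace ℝ (Fin d)) (hics : IsSpecialICS d p)
    (j : ℕ) (hj : 1 ≤ j) :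
    LinearIndependent ℝ (fun a : Fin d => uvec p (j + a)) := by
  have haff := (hics.2 j hj).1
  rw [affineIndependent_iff] at haff
  rw [Fintype.linearIndependent_iff]
  intro g hg
  set G : ℕ → ℝ := fun n => if h : n < d then g ⟨n, h⟩ else 0 with hG
  set W : ℕ → ℝ := fun n => G n - (if n = 0 then 0 else G (n - 1)) with hWdef
  have hGd : G d = 0 := by simp [hG]
  have hsum : ∑ k ∈ Finset.range (d + 1), W k = 0 := by
    have h1 : ∑ k ∈ Finset.range (d + 1), W k =
        ∑ k ∈ Finset.range (d + 1), G k
          - ∑ k ∈ Finset.range (d + 1), (if k = 0 then 0 else G (k - 1)) := by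
      rw [← Finset.sum_sub_distrib]
    have h2 : ∑ k ∈ Finset.range (d + 1), (if k = 0 then (0:ℝ) else G (k - 1)) =
        ∑ k ∈ Finset.range d, G k := by
      rw [Finset.sum_range_succ' (fun k => if k = 0 then (0:ℝ) else G (k - 1)) d]
      simp
    rw [h1, h2, Finset.sum_range_succ, hGd]
    ring
  have hgsum : ∑ k ∈ Finset.range d, G k • uvec p (j + k) = 0 := by
    rw [← hg, ← Fin.sum_univ_eq_sum_range (fun k => G k • uvec p (j + k)) d]
    apply Finset.sum_congr rfl
    intro a _
    simp [hG]
  have hvec : ∑ k ∈ Finset.range (d + 1), W k • p (j + k) = 0 := by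
    have h1 : ∑ k ∈ Finset.range (d + 1), W k • p (j + k) =
        ∑ k ∈ Finset.range (d + 1), G k • p (j + k)
          - ∑ k ∈ Finset.range (d + 1), (if k = 0 then 0 else G (k - 1)) • p (j + k) := by
      rw [← Finset.sum_sub_distrib]
      apply Finset.sum_congr rfl
      intro k _
      rw [hWdef, sub_smul]
    have h2 : ∑ k ∈ Finset.range (d + 1), (if k = 0 then (0:ℝ) else G (k - 1)) • p (j + k) =
        ∑ k ∈ Finset.range d, G k • p (j + k + 1) := by
      rw [Finset.sum_range_succ' (fun k => (if k = 0 then (0:ℝ) else G (k - 1)) • p (j + k)) d]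
      simp [Nat.add_assoc]
    rw [h1, h2, Finset.sum_range_succ, hGd, zero_smul, add_zero, ← Finset.sum_sub_distrib]
    rw [← hgsum]
    apply Finset.sum_congr rfl
    intro k _
    rw [← smul_sub]
    rfl
  have hWzero : ∀ n, n < d + 1 → W n = 0 := by
    intro n hn
    have hvec' : ∑ e : Fin (d + 1), (fun e : Fin (d + 1) => W e) e • p (j + e) = 0 := by
      rw [Fin.sum_univ_eq_sum_range (fun k => W k • p (j + k)) (d + 1)]
      exact hvec
    have hsum' : Finset.univ.sum (fun e : Fin (d + 1) => W e) = 0 := by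
      rw [Fin.sum_univ_eq_sum_range (fun k => W k) (d + 1)]
      exact hsum
    exact haff Finset.univ (fun e => W e) hsum' hvec' ⟨n, hn⟩ (Finset.mem_univ _)
  have hGzero : ∀ n, n ≤ d → G n = 0 := by
    intro n
    induction n with
    | zero =>
      intro _
      have := hWzero 0 (by omega)
      simpa [hWdef] using this
    | succ m ih =>
      intro hm
      have h := hWzero (m + 1) (by omega)
      rw [hWdef] at h
      simp only [Nat.add_sub_cancel, if_neg (Nat.succ_ne_zero m)] at h
      have := ih (by omega)
      linarith [h]
  intro i
  have := hGzero i (by omega)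
  simpa [hG, i.isLt] using this

lemma uvec_ne (p : ℕ → EuclideanSpace ℝ (Fin d)) (hics : IsSpecialICS d p) (hd : 2 ≤ d)
    (j : ℕ) (hj : 1 ≤ j) : uvec p j ≠ 0 := by
  have h := (lemC p hics j hj).ne_zero ⟨0, by omega⟩
  simpa using h

lemma mdist_pos (p : ℕ → EuclideanSpace ℝ (Fin d)) (hics : IsSpecialICS d p) (hd : 2 ≤ d)
    (j : ℕ) (hj : 1 ≤ j) : 0 < mdist p j := by
  rw [mdist, dist_pos]
  intro h
  exact uvec_ne p hics hd j hj (by rw [uvec, h, sub_self])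

lemma step1 (p : ℕ → EuclideanSpace ℝ (Fin d)) (hics : IsSpecialICS d p) (hd : 2 ≤ d)
    (i : ℕ) (hi : 1 ≤ i) : ∃ l : ℝ, uvec p (i + d + 2) = l • uvec p i := by
  classical
  haveI : NeZero d := ⟨by omega⟩
  haveI : Nonempty (Fin d) := ⟨⟨0, by omega⟩⟩
  set f : Fin d → EuclideanSpace ℝ (Fin d) :=
    fun a => if a = 0 then uvec p i else uvec p (i + 1 + a) with hf
  have hvalpos : ∀ a : Fin d, a ≠ 0 → 1 ≤ (a : ℕ) := by
    intro a ha
    by_contra h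
    have hv : (a : ℕ) = 0 := by omega
    exact ha (Fin.eq_of_val_eq (by simpa using hv))
  have ortho1 : ∀ a : Fin d, a ≠ 0 → ⟪uvec p i, uvec p (i + 1 + a)⟫ = 0 := by
    intro a ha
    have h := lemB2 p hics i (1 + a) hi (by have := hvalpos a ha; omega)
      (by have := a.isLt; omega)
    rwa [show i + (1 + (a : ℕ)) = i + 1 + a by ring] at h
  have ortho2 : ∀ a : Fin d, a ≠ 0 → ⟪uvec p (i + 1 + a), uvec p (i + d + 2)⟫ = 0 := by
    intro a ha
    have h := lemB2 p hics (i + 1 + a) (d + 1 - a) (by omega)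
      (by have := a.isLt; omega) (by have := hvalpos a ha; omega)
    rwa [show i + 1 + (a:ℕ) + (d + 1 - (a:ℕ)) = i + d + 2 by have := a.isLt; omega] at h
  have hMi : ⟪uvec p i, uvec p i⟫ = mdist p i ^ 2 := lemB0 p i
  have hMipos : 0 < mdist p i := mdist_pos p hics hd i hi
  have hfli : LinearIndependent ℝ f := by
    rw [Fintype.linearIndependent_iff]
    intro g hg
    have hg0 : g 0 = 0 := by
      have h := congrArg (fun x => ⟪uvec p i, x⟫) hg
      simp only [inner_sum, inner_zero_right, real_inner_smul_right] at h
      rw [Finset.sum_eq_single (0 : Fin d)] at h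
      · simp only [hf, if_pos rfl, hMi] at h
        have : mdist p i ^ 2 ≠ 0 := by positivity
        rcases mul_eq_zero.mp h with h' | h'
        · exact h'
        · exact absurd h' this
      · intro b _ hb
        simp only [hf, if_neg hb, ortho1 b hb, mul_zero]
      · intro h; exact absurd (Finset.mem_univ _) h
    have hg' : ∑ b : Fin d, (if b = 0 then 0 else g b) • uvec p ((i + 1) + b) = 0 := by
      rw [← hg]
      apply Finset.sum_congr rfl
      intro b _
      by_cases hb : b = 0
      · simp [hb, hg0, hf]
      · simp [hf, hb]
    have hind := lemC p hics (i + 1) (by omega)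
    rw [Fintype.linearIndependent_iff] at hind
    have hz := hind _ hg'
    intro a
    by_cases ha : a = 0
    · rw [ha]; exact hg0
    · have := hz a
      rwa [if_neg ha] at this
  have hspan : Submodule.span ℝ (Set.range f) = ⊤ :=
    hfli.span_eq_top_of_card_eq_finrank (by simp [finrank_euclideanSpace_fin])
  set l : ℝ := ⟪uvec p i, uvec p (i + d + 2)⟫ / mdist p i ^ 2 with hl
  set w : EuclideanSpace ℝ (Fin d) := uvec p (i + d + 2) - l • uvec p i with hwdef
  have hw : ∀ a : Fin d, ⟪f a, w⟫ = 0 := by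
    intro a
    by_cases ha : a = 0
    · rw [ha]
      simp only [hf, if_pos rfl, hwdef, inner_sub_right, real_inner_smul_right, hMi, hl]
      field_simp
      ring
    · simp only [hf, if_neg ha, hwdef, inner_sub_right, real_inner_smul_right]
      rw [ortho2 a ha, real_inner_comm, ortho1 a ha]
      ring
  have hwzero : w = 0 := by
    obtain ⟨c, hc⟩ := (Submodule.mem_span_range_iff_exists_fun ℝ).mp
      (hspan ▸ Submodule.mem_top : w ∈ Submodule.span ℝ (Set.range f))
    have : ⟪w, w⟫ = 0 := by
      rw [← hc, sum_inner]
      apply Finset.sum_eq_zero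
      intro a _
      rw [real_inner_smul_left, hc, hw a, mul_zero]
    exact inner_self_eq_zero.mp this
  exact ⟨l, by rw [← sub_eq_zero]; exact hwzero⟩

lemma sign3 (p : ℕ → EuclideanSpace ℝ (Fin d)) (hics : IsSpecialICS d p) (hd : 2 ≤ d)
    (i : ℕ) (hi : 1 ≤ i) : 0 < ⟪uvec p (i + d + 1), uvec p i⟫ := by
  classical
  haveI : NeZero d := ⟨by omega⟩
  set B : Matrix (Fin d) (Fin d) ℝ := fun x a => uvec p (i + 1 + a) x with hB
  set M : Matrix (Fin (d + 1)) (Fin (d + 1)) ℝ :=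
    fun a b => ⟪uvec p (i + 1 + a), uvec p (i + b)⟫ with hM
  -- entries
  have hMdiag : ∀ a : Fin (d + 1), (a : ℕ) < d → M a a = -(mdist p (i + a) ^ 2) / 2 := by
    intro a ha
    have h := lemB1 p hics hd (i + a) (by omega)
    rw [hM]
    simp only
    rw [show i + 1 + (a : ℕ) = (i + (a : ℕ)) + 1 by ring, real_inner_comm]
    exact h
  have hMlow : ∀ a b : Fin (d + 1), (b : ℕ) < (a : ℕ) → ¬((a : ℕ) = d ∧ (b : ℕ) = 0) →
      M a b = 0 := by
    intro a b hba hne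
    have hk2 : 2 ≤ (a : ℕ) + 1 - (b : ℕ) := by omega
    have hkd : (a : ℕ) + 1 - (b : ℕ) ≤ d := by
      have := a.isLt
      omega
    have h := lemB2 p hics (i + b) ((a : ℕ) + 1 - (b : ℕ)) (by omega) hk2 hkd
    rw [show i + (b : ℕ) + ((a : ℕ) + 1 - (b : ℕ)) = i + 1 + (a : ℕ) by omega] at h
    rw [hM]
    simp only
    rw [real_inner_comm]
    exact h
  have hMlast : M (Fin.last d) (Fin.last d) = -(mdist p (i + d) ^ 2) / 2 := by
    have h := lemB1 p hics hd (i + d) (by omega)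
    rw [hM]
    simp only [Fin.val_last]
    rw [show i + 1 + d = (i + d) + 1 by ring, real_inner_comm]
    exact h
  -- det M = 0
  have hdetM : M.det = 0 := by
    have hdep : ¬ LinearIndependent ℝ (fun a : Fin (d + 1) => uvec p (i + 1 + a)) := by
      intro h
      have := h.fintype_card_le_finrank
      simp [finrank_euclideanSpace_fin] at this
    obtain ⟨g, hg, a0, ha0⟩ := Fintype.not_linearIndependent_iff.mp hdep
    rw [← Matrix.exists_vecMul_eq_zero_iff]
    refine ⟨g, fun h => ha0 (by rw [h]; rfl), ?_⟩
    funext b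
    rw [Matrix.vecMul, dotProduct]
    simp only [hM, Pi.zero_apply]
    have : ∑ a : Fin (d + 1), g a * ⟪uvec p (i + 1 + a), uvec p (i + b)⟫ =
        ⟪∑ a : Fin (d + 1), g a • uvec p (i + 1 + a), uvec p (i + b)⟫ := by
      rw [sum_inner]
      exact Finset.sum_congr rfl fun a _ => (real_inner_smul_left _ _ _).symm
    rw [this, hg, inner_zero_left]
  -- the unknown corner entry
  set x : ℝ := M (Fin.last d) 0 with hx
  -- the last row
  have hrow : M (Fin.last d) = x • (Pi.single (0 : Fin (d + 1)) (1:ℝ) : Fin (d + 1) → ℝ)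
      + (-(mdist p (i + d) ^ 2) / 2) • (Pi.single (Fin.last d) (1:ℝ) : Fin (d + 1) → ℝ) := by
    funext b
    by_cases hb0 : b = 0
    · subst hb0
      have hlast : (0 : Fin (d + 1)) ≠ Fin.last d := by
        intro h
        have := congrArg (fun z : Fin (d + 1) => (z : ℕ)) h
        simp [Fin.val_last] at this
        omega
      simp [Pi.single_apply, hlast, hx]
    · by_cases hbl : b = Fin.last d
      · subst hbl
        have h0 : (Fin.last d) ≠ (0 : Fin (d + 1)) := by
          intro h
          have := congrArg (fun z : Fin (d + 1) => (z : ℕ)) h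
          simp [Fin.val_last] at this
          omega
        simp [Pi.single_apply, h0.symm, hMlast]
      · have hb0' : (b : ℕ) ≠ 0 := fun h => hb0 (Fin.eq_of_val_eq (by simpa using h))
        have hbl' : (b : ℕ) < d := by
          have := b.isLt
          rcases Nat.lt_or_ge (b : ℕ) d with h | h
          · exact h
          · exact absurd (Fin.eq_of_val_eq (by simp [Fin.val_last]; omega)) hbl
        have := hMlow (Fin.last d) b (by simp [Fin.val_last]; omega)
          (by simp [Fin.val_last]; omega)
        simp [Pi.single_apply, hb0, hbl, this]
  -- D2 : determinant with last row replaced by e_last (upper triangular)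
  have hD2 : (M.updateRow (Fin.last d) (Pi.single (Fin.last d) (1:ℝ) : Fin (d + 1) → ℝ)).det
      = (-1 : ℝ) ^ d * ∏ a : Fin d, (mdist p (i + a) ^ 2 / 2) := by
    rw [Matrix.det_of_upperTriangular]
    · rw [Fin.prod_univ_castSucc]
      have hlastdiag : (M.updateRow (Fin.last d) (Pi.single (Fin.last d) (1:ℝ) : Fin (d + 1) → ℝ))
          (Fin.last d) (Fin.last d) = 1 := by
        rw [Matrix.updateRow_self]
        simp
      rw [hlastdiag, mul_one]
      have : ∀ a : Fin d,
          (M.updateRow (Fin.last d) (Pi.single (Fin.last d) (1:ℝ) : Fin (d + 1) → ℝ))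
            a.castSucc a.castSucc = -(mdist p (i + a) ^ 2) / 2 := by
        intro a
        rw [Matrix.updateRow_ne (Fin.castSucc_lt_last a).ne]
        have := hMdiag a.castSucc (by simpa using a.isLt)
        simpa using this
      rw [Finset.prod_congr rfl (fun a _ => this a)]
      have : ∀ a : Fin d, -(mdist p (i + a) ^ 2) / 2 = (-1 : ℝ) * (mdist p (i + a) ^ 2 / 2) := by
        intro a; ring
      rw [Finset.prod_congr rfl (fun a _ => this a), Finset.prod_mul_distrib]
      simp [Finset.prod_const]
    · intro a b hba
      by_cases ha : a = Fin.last d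
      · subst ha
        rw [Matrix.updateRow_self]
        have : b ≠ Fin.last d := ne_of_lt hba
        simp [Pi.single_apply, this]
      · rw [Matrix.updateRow_ne ha]
        have hval : (a : ℕ) ≠ d := fun h => ha (Fin.eq_of_val_eq (by simp [Fin.val_last, h]))
        exact hMlow a b hba (by omega)
  -- D1 : determinant with last row replaced by e_0 (cofactor expansion)
  have hGram : ∀ a b : Fin d,
      (M.updateRow (Fin.last d) (Pi.single (0 : Fin (d + 1)) (1:ℝ) : Fin (d + 1) → ℝ)).submatrix
        (Fin.last d).succAbove (0 : Fin (d + 1)).succAbove a b = (Bᵀ * B) a b := by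
    intro a b
    rw [Matrix.submatrix_apply, Fin.succAbove_last, Fin.succAbove_zero]
    rw [Matrix.updateRow_ne (Fin.castSucc_lt_last a).ne]
    rw [Matrix.mul_apply]
    have hMentry : M a.castSucc b.succ = ⟪uvec p (i + 1 + a), uvec p (i + 1 + b)⟫ := by
      rw [hM]
      simp only [Fin.coe_castSucc, Fin.val_succ]
      rw [show i + ((b : ℕ) + 1) = i + 1 + (b : ℕ) by ring]
    rw [hMentry, PiLp.inner_apply]
    apply Finset.sum_congr rfl
    intro t _
    rw [Matrix.transpose_apply, hB]
    simp [mul_comm]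
  have hD1 : (M.updateRow (Fin.last d) (Pi.single (0 : Fin (d + 1)) (1:ℝ) : Fin (d + 1) → ℝ)).det
      = (-1 : ℝ) ^ d * (Bᵀ * B).det := by
    rw [Matrix.det_succ_row _ (Fin.last d)]
    rw [Finset.sum_eq_single (0 : Fin (d + 1))]
    · rw [Matrix.updateRow_self]
      have h1 : (Pi.single (0 : Fin (d + 1)) (1:ℝ) : Fin (d + 1) → ℝ) 0 = 1 := by simp
      rw [h1]
      have h2 : ((M.updateRow (Fin.last d)
          (Pi.single (0 : Fin (d + 1)) (1:ℝ) : Fin (d + 1) → ℝ)).submatrix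
          (Fin.last d).succAbove (0 : Fin (d + 1)).succAbove).det = (Bᵀ * B).det := by
        congr 1
        funext a b
        exact hGram a b
      rw [h2]
      simp [Fin.val_last]
    · intro j _ hj
      rw [Matrix.updateRow_self]
      have : (Pi.single (0 : Fin (d + 1)) (1:ℝ) : Fin (d + 1) → ℝ) j = 0 := by
        simp [Pi.single_apply, hj]
      rw [this]
      ring
    · intro h
      exact absurd (Finset.mem_univ _) h
  -- decomposition of det M
  have hdecomp : M.det = x * ((-1 : ℝ) ^ d * (Bᵀ * B).det)
      + (-(mdist p (i + d) ^ 2) / 2) * ((-1 : ℝ) ^ d * ∏ a : Fin d, (mdist p (i + a) ^ 2 / 2)) := by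
    conv_lhs => rw [← Matrix.updateRow_eq_self M (Fin.last d)]
    rw [hrow, Matrix.det_updateRow_add, Matrix.det_updateRow_smul, Matrix.det_updateRow_smul,
      hD1, hD2]
  -- det B ≠ 0
  have hdetB : B.det ≠ 0 := by
    intro h
    obtain ⟨v, hv, hv0⟩ := Matrix.exists_mulVec_eq_zero_iff.mpr h
    have hsum : ∑ a : Fin d, v a • uvec p (i + 1 + a) = 0 := by
      have : ∀ t : Fin d, (∑ a : Fin d, v a • uvec p (i + 1 + a)) t = 0 := by
        intro t
        have := congrFun hv0 t
        rw [Matrix.mulVec, dotProduct] at this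
        simp only [Pi.zero_apply] at this ⊢
        rw [← this]
        rw [WithLp.ofLp_sum, Finset.sum_apply]
        apply Finset.sum_congr rfl
        intro a _
        simp [hB]
        ring
      ext t
      exact this t
    have hli := lemC p hics (i + 1) (by omega)
    rw [Fintype.linearIndependent_iff] at hli
    exact hv (funext fun a => hli v hsum a)
  -- conclude
  have hgram_pos : 0 < (Bᵀ * B).det := by
    rw [Matrix.det_mul, Matrix.det_transpose]
    have := mul_self_nonneg B.det
    rcases lt_or_eq_of_le this with h | h
    · nlinarith
    · exact absurd (by nlinarith) (mul_ne_zero hdetB hdetB)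
  have hQ : 0 < ∏ a : Fin d, (mdist p (i + a) ^ 2 / 2) := by
    apply Finset.prod_pos
    intro a _
    have := mdist_pos p hics hd (i + a) (by omega)
    positivity
  have hkey : x * (Bᵀ * B).det = (mdist p (i + d) ^ 2 / 2) * ∏ a : Fin d, (mdist p (i + a) ^ 2 / 2) := by
    have h0 := hdetM
    rw [hdecomp] at h0
    rcases Nat.even_or_odd d with he | he
    · rw [he.neg_one_pow] at h0
      linarith
    · rw [he.neg_one_pow] at h0
      linarith
  have hxpos : 0 < x := by
    have hm : 0 < mdist p (i + d) ^ 2 / 2 := by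
      have := mdist_pos p hics hd (i + d) (by omega)
      positivity
    nlinarith
  have hfinal : x = ⟪uvec p (i + d + 1), uvec p i⟫ := by
    rw [hx, hM]
    simp only [Fin.val_last]
    rw [show i + 1 + d = i + d + 1 by ring, show i + ((0 : Fin (d+1)) : ℕ) = i by simp]
  rwa [hfinal] at hxpos

/-- main structural step: the common negative ratio -/
lemma main_ratio (p : ℕ → EuclideanSpace ℝ (Fin d)) (hics : IsSpecialICS d p) (hd : 2 ≤ d) :
    ∃ L : ℝ, L < 0 ∧ ∀ i, 1 ≤ i → uvec p (i + d + 2) = L • uvec p i := by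
  classical
  -- choose l i for each i
  have hstep : ∀ i, 1 ≤ i → ∃ l : ℝ, uvec p (i + d + 2) = l • uvec p i :=
    fun i hi => step1 p hics hd i hi
  set l : ℕ → ℝ := fun i => if hi : 1 ≤ i then (hstep i hi).choose else 0 with hl
  have hlspec : ∀ i, 1 ≤ i → uvec p (i + d + 2) = l i • uvec p i := by
    intro i hi
    rw [hl]
    simp only [dif_pos hi]
    exact (hstep i hi).choose_spec
  have hneg : ∀ i, 1 ≤ i → l i < 0 := by
    intro i hi
    have hB1 := lemB1 p hics hd (i + d + 1) (by omega)
    rw [show i + d + 1 + 1 = i + d + 2 by ring, hlspec i hi, real_inner_smul_right] at hB1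
    have hX := sign3 p hics hd i hi
    have hm := mdist_pos p hics hd (i + d + 1) (by omega)
    nlinarith
  have hconst : ∀ i, 1 ≤ i → l (i + 1) = l i := by
    intro i hi
    have hB1 := lemB1 p hics hd (i + d + 2) (by omega)
    rw [show i + d + 2 + 1 = (i + 1) + d + 2 by ring, hlspec i hi,
      hlspec (i + 1) (by omega), real_inner_smul_right, real_inner_smul_left,
      lemB1 p hics hd i hi] at hB1
    -- mdist (i+d+2) = |l i| * mdist i
    have hnorm : mdist p (i + d + 2) ^ 2 = (l i) ^ 2 * mdist p i ^ 2 := by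
      have : ⟪uvec p (i + d + 2), uvec p (i + d + 2)⟫ = mdist p (i + d + 2) ^ 2 := lemB0 p _
      rw [hlspec i hi, real_inner_smul_left, real_inner_smul_right, lemB0 p i] at this
      nlinarith [this]
    have hm := mdist_pos p hics hd i hi
    have hli := hneg i hi
    have h2 : l i * (l (i + 1) * -(mdist p i ^ 2) / 2) = -((l i)^2 * mdist p i ^ 2) / 2 := by
      rw [← hnorm]
      linarith [hB1]
    have hM2 : mdist p i ^ 2 ≠ 0 := by positivity
    have h3 : (l i * l (i + 1)) * mdist p i ^ 2 = (l i * l i) * mdist p i ^ 2 := by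
      linear_combination (-2 : ℝ) * h2
    have h4 := mul_right_cancel₀ hM2 h3
    exact mul_left_cancel₀ (ne_of_lt hli) h4
  have hall : ∀ i, 1 ≤ i → l i = l 1 := by
    intro i hi
    induction i with
    | zero => omega
    | succ n ih =>
      rcases Nat.lt_or_ge 1 (n + 1) with h | h
      · rw [hconst n (by omega), ih (by omega)]
      · have : n = 0 := by omega
        subst this
        rfl
  refine ⟨l 1, hneg 1 le_rfl, fun i hi => ?_⟩
  rw [← hall i hi]
  exact hlspec i hi

lemma teleprod (f : ℕ → ℝ) (hf : ∀ k, 1 ≤ k → f k ≠ 0) :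
    ∀ n, 1 ≤ n → ∏ k ∈ Finset.Icc 1 n, (f k / f (k + 1)) = f 1 / f (n + 1) := by
  intro n hn
  induction n with
  | zero => omega
  | succ m ih =>
    rcases Nat.lt_or_ge m 1 with h | h
    · have : m = 0 := by omega
      subst this
      simp
    · rw [Finset.prod_Icc_succ_top (by omega : 1 ≤ m + 1), ih h]
      have h1 : f (m + 1) ≠ 0 := hf _ (by omega)
      have h2 : f (m + 1 + 1) ≠ 0 := hf _ (by omega)
      field_simp

end ICSAux2


section
open ICSAux ICSAux2

/-- Let `p` be a special `d`-dimensional ICS with scale factor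
`r = 1/(2^{d+2}√(a_1 ⋯ a_{d+2}))` where `a_i = |p_i-p_{i+1}|²/(4|p_{i+1}-p_{i+2}|²)`.
Then `p_{i+d+2} - p_{i+d+3} = -r(p_i - p_{i+1})` for all `i ≥ 1`; consequently there
is a point `v ∈ ℝ^d` with `p_{i+d+2} = v - r·p_i` for all `i ≥ 1`. In particular,
`p` is periodic if and only if `r = 1`. -/
theorem scale_factor_structure (d : ℕ) (hd : 2 ≤ d)
    (p : ℕ → EuclideanSpace ℝ (Fin d)) (hics : IsSpecialICS d p)
    (a : ℕ → ℝ)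
    (ha : ∀ i, a i = dist (p i) (p (i + 1)) ^ 2 / (4 * dist (p (i + 1)) (p (i + 2)) ^ 2))
    (r : ℝ)
    (hr : r = 1 / (2 ^ (d + 2) * Real.sqrt (∏ k ∈ Finset.Icc 1 (d + 2), a k))) :
    (∀ i, 1 ≤ i → p (i + d + 2) - p (i + d + 3) = (-r) • (p i - p (i + 1))) ∧
    (∃ v : EuclideanSpace ℝ (Fin d), ∀ i, 1 ≤ i → p (i + d + 2) = v - r • p i) ∧
    ((∃ m : ℕ, 0 < m ∧ ∀ i, 1 ≤ i → p (i + m) = p i) ↔ r = 1) := by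
  obtain ⟨L, hL, hLspec⟩ := main_ratio p hics hd
  have hmpos : ∀ j, 1 ≤ j → 0 < mdist p j := fun j hj => mdist_pos p hics hd j hj
  have hm1 : 0 < mdist p 1 := hmpos 1 le_rfl
  have hmd3pos : 0 < mdist p (d + 3) := hmpos _ (by omega)
  have hscale : ∀ i, 1 ≤ i → mdist p (i + d + 2) = (-L) * mdist p i := by
    intro i hi
    have h := hLspec i hi
    have : mdist p (i + d + 2) = ‖uvec p (i + d + 2)‖ := by
      rw [mdist, dist_eq_norm, uvec]
    rw [this, h, norm_smul, Real.norm_eq_abs, abs_of_neg hL]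
    rw [mdist, dist_eq_norm, uvec]
  have hmd3 : mdist p (d + 3) = -L * mdist p 1 := by
    have := hscale 1 le_rfl
    rwa [show 1 + d + 2 = d + 3 by ring] at this
  -- compute r = -L
  have hprod : ∏ k ∈ Finset.Icc 1 (d + 2), a k
      = ((1/2 : ℝ) ^ (d + 2) * (mdist p 1 / mdist p (d + 3))) ^ 2 := by
    have hfe : ∀ k ∈ Finset.Icc 1 (d + 2), a k
        = (1/4 : ℝ) * ((mdist p k ^ 2) / (mdist p (k + 1) ^ 2)) := by
      intro k hk
      rw [Finset.mem_Icc] at hk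
      rw [ha k, mdist, mdist]
      rw [show k + 1 + 1 = k + 2 by ring]
      have : dist (p (k + 1)) (p (k + 2)) ≠ 0 := by
        have := hmpos (k + 1) (by omega)
        rw [mdist, show k + 1 + 1 = k + 2 by ring] at this
        linarith
      field_simp
    rw [Finset.prod_congr rfl hfe, Finset.prod_mul_distrib, Finset.prod_const]
    have hcard : (Finset.Icc 1 (d + 2)).card = d + 2 := by
      simp
    have htel := teleprod (fun k => mdist p k ^ 2)
      (fun k hk => by have := hmpos k hk; positivity) (d + 2) (by omega)
    rw [hcard, htel, show d + 2 + 1 = d + 3 by ring]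
    have h4 : ((1/4 : ℝ)) ^ (d + 2) = ((1/2 : ℝ)) ^ (d + 2) * ((1/2 : ℝ)) ^ (d + 2) := by
      rw [← mul_pow]; norm_num
    rw [h4]
    field_simp
  have hrval : r = mdist p (d + 3) / mdist p 1 := by
    rw [hr, hprod, Real.sqrt_sq (by positivity)]
    have h21 : (2 : ℝ) ^ (d + 2) * ((1/2 : ℝ)) ^ (d + 2) = 1 := by
      rw [← mul_pow]; norm_num
    rw [show (2:ℝ) ^ (d + 2) * ((1/2 : ℝ) ^ (d + 2) * (mdist p 1 / mdist p (d + 3)))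
        = ((2:ℝ) ^ (d + 2) * ((1/2 : ℝ)) ^ (d + 2)) * (mdist p 1 / mdist p (d + 3)) by ring,
      h21, one_mul, one_div_div]
  have hrL : r = -L := by
    rw [hrval, hmd3]
    field_simp
  have hrpos : 0 < r := by rw [hrL]; linarith
  -- Part 1
  have part1 : ∀ i, 1 ≤ i → p (i + d + 2) - p (i + d + 3) = (-r) • (p i - p (i + 1)) := by
    intro i hi
    have h := hLspec i hi
    rw [uvec, uvec, show i + d + 2 + 1 = i + d + 3 by ring] at h
    rw [h, hrL, neg_neg]
  -- Part 2
  have hkey : ∀ i, 1 ≤ i → p (i + d + 2) + r • p i = p (1 + d + 2) + r • p 1 := by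
    intro i hi
    induction i with
    | zero => omega
    | succ n ih =>
      rcases Nat.lt_or_ge n 1 with h | h
      · have : n = 0 := by omega
        subst this
        rfl
      · have e := part1 n h
        have e2 : p (n + d + 3) + r • p (n + 1) = p (n + d + 2) + r • p n := by
          have e3 : p (n + d + 2) - p (n + d + 3) = -(r • p n) + r • p (n + 1) := by
            rw [e, neg_smul, smul_sub]
            abel
          have := sub_eq_iff_eq_add.mp e3
          rw [this]
          abel
        rw [show n + 1 + d + 2 = n + d + 3 by ring, e2, ih h]
  have part2 : ∃ v : EuclideanSpace ℝ (Fin d), ∀ i, 1 ≤ i → p (i + d + 2) = v - r • p i := by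
    refine ⟨p (1 + d + 2) + r • p 1, fun i hi => ?_⟩
    have := hkey i hi
    rw [← this]
    abel
  refine ⟨part1, part2, ?_⟩
  obtain ⟨v, hv⟩ := part2
  constructor
  · rintro ⟨m, hm, hper⟩
    have hrs : ∀ i, 1 ≤ i → mdist p (i + d + 2) = r * mdist p i := by
      intro i hi
      rw [hscale i hi, hrL]
    have hgeo : ∀ t : ℕ, mdist p (1 + t * (d + 2)) = r ^ t * mdist p 1 := by
      intro t
      induction t with
      | zero => simp
      | succ s ih =>
        have e : 1 + (s + 1) * (d + 2) = (1 + s * (d + 2)) + d + 2 := by ring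
        rw [e, hrs (1 + s * (d + 2)) (by omega), ih, pow_succ]
        ring
    have hpm : ∀ s : ℕ, mdist p (1 + s * m) = mdist p 1 := by
      intro s
      induction s with
      | zero => simp
      | succ t ih =>
        have e : 1 + (t + 1) * m = (1 + t * m) + m := by ring
        rw [e, mdist, mdist, hper (1 + t * m) (by omega),
          show 1 + t * m + m + 1 = (1 + t * m + 1) + m by ring,
          hper (1 + t * m + 1) (by omega), ← mdist]
        exact ih
    have hcomb : r ^ m * mdist p 1 = mdist p 1 := by
      rw [← hgeo m]
      have := hpm (d + 2)
      rw [show 1 + (d + 2) * m = 1 + m * (d + 2) by ring] at this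
      exact this
    have hrm : r ^ m = 1 := by
      have h1 : mdist p 1 ≠ 0 := ne_of_gt hm1
      exact mul_right_cancel₀ h1 (by rw [hcomb, one_mul])
    rcases lt_trichotomy r 1 with h | h | h
    · exfalso
      have : r ^ m < 1 := pow_lt_one₀ (le_of_lt hrpos) h (by omega)
      rw [hrm] at this
      exact lt_irrefl _ this
    · exact h
    · exfalso
      have : 1 < r ^ m := one_lt_pow₀ h (by omega)
      rw [hrm] at this
      exact lt_irrefl _ this
  · intro hr1
    refine ⟨2 * d + 4, by omega, fun i hi => ?_⟩
    have e1 : p ((i + d + 2) + d + 2) = v - r • p (i + d + 2) := hv (i + d + 2) (by omega)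
    rw [hv i hi, hr1, one_smul, one_smul] at e1
    rw [show i + (2 * d + 4) = i + d + 2 + d + 2 by ring, e1]
    abel

end
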